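/- arXiv:1302.5487 — 2 statements merged into one kernel-verified Lean document; each statement's English description precedes it below -/
import Mathlib

section
/- Let f be a monic complex polynomial with all N₀ roots z₁,…,z_{N₀} in the open unit disk, and write f(z) = ∑_{k=0}^{N₀} b_k z^k with b_{N₀} = 1. Let μ_k = ∑_{j=1}^{N₀} z_j^k be the power sums. Given numbers μ̃_1,…,μ̃_{N₀} with |μ̃_k − μ_k| < γ for some 0 ≤ γ ≤ 1, define b̃_{N₀} = 1 and recursively b̃_{N₀−k} = −(1/k) ∑_{l=1}^{k} μ̃_l b̃_{N₀−k+l} for 1 ≤ k ≤ N₀. Then there exists a constant C depending only on N₀ such that |b̃_k − b_k| ≤ C·γ for all 0 ≤ k ≤ N₀. -/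
open Complex Polynomial Finset

private lemma choose_le_two_pow' (N n : ℕ) : Nat.choose N n ≤ 2 ^ N := by
  rcases le_or_gt n N with h | h
  · calc Nat.choose N n ≤ ∑ i ∈ Finset.range (N + 1), Nat.choose N i :=
        Finset.single_le_sum (fun i _ => Nat.zero_le _) (Finset.mem_range.mpr (by omega))
    _ = 2 ^ N := Nat.sum_range_choose N
  · rw [Nat.choose_eq_zero_of_lt h]; positivity

private lemma esymm_abs_le' (N₀ : ℕ) (z : Fin N₀ → ℂ) (hz : ∀ j, ‖z j‖ < 1) (n : ℕ) :
    ‖(Multiset.map z Finset.univ.val).esymm n‖ ≤ 2 ^ N₀ := by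
  rw [Finset.esymm_map_val]
  calc ‖∑ t ∈ Finset.powersetCard n Finset.univ, ∏ j ∈ t, z j‖
      ≤ ∑ t ∈ Finset.powersetCard n Finset.univ, ‖∏ j ∈ t, z j‖ :=
        norm_sum_le _ _
    _ ≤ ∑ t ∈ Finset.powersetCard n Finset.univ, 1 := by
        refine Finset.sum_le_sum fun t _ => ?_
        rw [norm_prod]
        exact Finset.prod_le_one (fun j _ => norm_nonneg _) (fun j _ => (hz j).le)
    _ = (Nat.choose N₀ n : ℝ) := by simp [Finset.card_powersetCard]
    _ ≤ 2 ^ N₀ := by exact_mod_cast choose_le_two_pow' N₀ n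

private lemma coeff_eq' (N₀ : ℕ) (z : Fin N₀ → ℂ) {m : ℕ} (hm : m ≤ N₀) :
    (∏ j, (X - Polynomial.C (z j))).coeff m
      = (-1) ^ (N₀ - m) * (Multiset.map z Finset.univ.val).esymm (N₀ - m) := by
  have hc : Multiset.card (Multiset.map z Finset.univ.val) = N₀ := by simp
  have h1 : (∏ j, (X - Polynomial.C (z j)))
      = ((Multiset.map z Finset.univ.val).map (fun t => X - Polynomial.C t)).prod := by
    rw [Multiset.map_map, Finset.prod_eq_multiset_prod]
    rfl
  rw [h1, Multiset.prod_X_sub_C_coeff _ (by rw [hc]; exact hm), hc]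

private lemma coeff_abs_le' (N₀ : ℕ) (z : Fin N₀ → ℂ) (hz : ∀ j, ‖z j‖ < 1) (n : ℕ) :
    ‖(∏ j, (X - Polynomial.C (z j))).coeff n‖ ≤ 2 ^ N₀ := by
  rcases le_or_gt n N₀ with h | h
  · rw [coeff_eq' N₀ z h, norm_mul, norm_pow, norm_neg, norm_one, one_pow, one_mul]
    exact esymm_abs_le' N₀ z hz _
  · rw [Polynomial.coeff_eq_zero_of_natDegree_lt, norm_zero]
    · positivity
    · calc (∏ j, (X - Polynomial.C (z j))).natDegree
          = ∑ j : Fin N₀, (X - Polynomial.C (z j)).natDegree :=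
            Polynomial.natDegree_prod _ _ fun j _ => Polynomial.X_sub_C_ne_zero _
        _ = N₀ := by simp
        _ < n := h

private lemma psum_abs_le' (N₀ : ℕ) (z : Fin N₀ → ℂ) (hz : ∀ j, ‖z j‖ < 1) (l : ℕ) :
    ‖∑ j, z j ^ l‖ ≤ N₀ := by
  calc ‖∑ j, z j ^ l‖ ≤ ∑ j : Fin N₀, ‖z j ^ l‖ := norm_sum_le _ _
    _ ≤ ∑ _j : Fin N₀, 1 := by
        refine Finset.sum_le_sum fun j _ => ?_
        rw [norm_pow]
        exact pow_le_one₀ (norm_nonneg _) (hz j).le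
    _ = N₀ := by simp
private lemma newton (N₀ : ℕ) (z : Fin N₀ → ℂ) {k : ℕ} (hk1 : 1 ≤ k) (hk : k ≤ N₀) :
    (k : ℂ) * (∏ j, (X - Polynomial.C (z j))).coeff (N₀ - k)
      = -∑ l ∈ Finset.Icc 1 k, (∑ j, z j ^ l) *
          (∏ j, (X - Polynomial.C (z j))).coeff (N₀ - k + l) := by
  set E : ℕ → ℂ := fun n => (Multiset.map z Finset.univ.val).esymm n with hE
  set p : ℕ → ℂ := fun n => ∑ j, z j ^ n with hp
  have key : (k : ℂ) * E k = (-1) ^ (k + 1) *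
      ∑ a ∈ Finset.HasAntidiagonal.antidiagonal k with a.1 < k, (-1) ^ a.1 * E a.1 * p a.2 := by
    have key := congrArg (MvPolynomial.aeval z) (MvPolynomial.mul_esymm_eq_sum (Fin N₀) ℂ k)
    simpa [hE, hp, MvPolynomial.aeval_esymm_eq_multiset_esymm, MvPolynomial.psum, map_sum,
      map_pow, map_mul, map_natCast] using key
  have hre : ∑ a ∈ Finset.HasAntidiagonal.antidiagonal k with a.1 < k, (-1 : ℂ) ^ a.1 * E a.1 * p a.2
      = ∑ l ∈ Finset.Icc 1 k, (-1) ^ (k - l) * E (k - l) * p l := by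
    refine Finset.sum_nbij' (i := fun a => a.2) (j := fun l => (k - l, l)) ?_ ?_ ?_ ?_ ?_
    · intro a ha
      simp only [Finset.mem_filter, Finset.HasAntidiagonal.mem_antidiagonal] at ha
      simp only [Finset.mem_Icc]; omega
    · intro l hl
      simp only [Finset.mem_Icc] at hl
      simp only [Finset.mem_filter, Finset.HasAntidiagonal.mem_antidiagonal]; omega
    · intro a ha
      simp only [Finset.mem_filter, Finset.HasAntidiagonal.mem_antidiagonal] at ha
      ext <;> simp <;> omega
    · intro l hl; rfl
    · intro a ha
      simp only [Finset.mem_filter, Finset.HasAntidiagonal.mem_antidiagonal] at ha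
      have : a.1 = k - a.2 := by omega
      rw [this]
  have h2 : N₀ - (N₀ - k) = k := by omega
  have hrhs : ∑ l ∈ Finset.Icc 1 k, (∑ j, z j ^ l) *
        (∏ j, (X - Polynomial.C (z j))).coeff (N₀ - k + l)
      = ∑ l ∈ Finset.Icc 1 k, p l * ((-1) ^ (k - l) * E (k - l)) := by
    refine Finset.sum_congr rfl fun l hl => ?_
    rw [Finset.mem_Icc] at hl
    rw [coeff_eq' N₀ z (by omega : N₀ - k + l ≤ N₀),
      (by omega : N₀ - (N₀ - k + l) = k - l)]
  rw [hrhs, coeff_eq' N₀ z (by omega : N₀ - k ≤ N₀), h2]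
  have hsgn : ((-1 : ℂ)) ^ k * (-1) ^ (k + 1) = -1 := by
    rw [← pow_add, (by ring : k + (k + 1) = 2 * k + 1), pow_succ, pow_mul]
    simp
  calc (k : ℂ) * ((-1) ^ k * E k) = (-1) ^ k * ((k : ℂ) * E k) := by ring
    _ = (-1) ^ k * ((-1) ^ (k + 1) * ∑ l ∈ Finset.Icc 1 k, (-1) ^ (k - l) * E (k - l) * p l) := by
        rw [key, hre]
    _ = -∑ l ∈ Finset.Icc 1 k, p l * ((-1) ^ (k - l) * E (k - l)) := by
        rw [← mul_assoc, hsgn, neg_one_mul, neg_inj]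
        exact Finset.sum_congr rfl fun l _ => by ring

private lemma main_ind (N₀ : ℕ) (k : ℕ) : ∃ C : ℝ, 0 ≤ C ∧
    ∀ (z : Fin N₀ → ℂ) (μt bt b : ℕ → ℂ) (γ : ℝ),
      (∀ j, ‖z j‖ < 1) → 0 ≤ γ → γ ≤ 1 →
      (∀ l ∈ Finset.Icc 1 N₀, ‖μt l - ∑ j, z j ^ l‖ < γ) →
      bt N₀ = 1 →
      (∀ l ∈ Finset.Icc 1 N₀,
        bt (N₀ - l) = -(1 / (l : ℂ)) * ∑ i ∈ Finset.Icc 1 l, μt i * bt (N₀ - l + i)) →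
      b N₀ = 1 →
      (∀ l ∈ Finset.Icc 1 N₀,
        b (N₀ - l) = -(1 / (l : ℂ)) * ∑ i ∈ Finset.Icc 1 l, (∑ j, z j ^ i) * b (N₀ - l + i)) →
      (∀ n, ‖b n‖ ≤ 2 ^ N₀) →
      ∀ m ≤ k, m ≤ N₀ →
        ‖bt (N₀ - m) - b (N₀ - m)‖ ≤ C * γ := by
  induction k with
  | zero =>
    refine ⟨0, le_refl 0, fun z μt bt b γ hz hγ0 hγ1 hμ hbt1 hbt hb1 hb hbd m hm hmN => ?_⟩
    interval_cases m
    rw [Nat.sub_zero, hbt1, hb1]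
    simp
  | succ k IH =>
    obtain ⟨C, hC0, hC⟩ := IH
    refine ⟨2 ^ N₀ + (N₀ + 1) * C, by positivity,
      fun z μt bt b γ hz hγ0 hγ1 hμ hbt1 hbt hb1 hb hbd m hm hmN => ?_⟩
    rcases le_or_gt m k with hmk | hmk
    · refine (hC z μt bt b γ hz hγ0 hγ1 hμ hbt1 hbt hb1 hb hbd m hmk hmN).trans ?_
      have h1 : (0:ℝ) ≤ 2 ^ N₀ := by positivity
      have h2 : (0:ℝ) ≤ (N₀ : ℝ) * C := by positivity
      nlinarith
    · have hm1' : 1 ≤ m := by omega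
      have hmem : m ∈ Finset.Icc 1 N₀ := Finset.mem_Icc.mpr ⟨hm1', hmN⟩
      have hterm : ∀ l ∈ Finset.Icc 1 m,
          ‖μt l * bt (N₀ - m + l) - (∑ j, z j ^ l) * b (N₀ - m + l)‖
          ≤ (2 ^ N₀ + (N₀ + 1) * C) * γ := by
        intro l hl
        rw [Finset.mem_Icc] at hl
        have hn : N₀ - m + l = N₀ - (m - l) := by omega
        have hIH : ‖bt (N₀ - m + l) - b (N₀ - m + l)‖ ≤ C * γ := by
          rw [hn]
          exact hC z μt bt b γ hz hγ0 hγ1 hμ hbt1 hbt hb1 hb hbd (m - l) (by omega) (by omega)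
        have hγC : C * γ ≤ C := by
          calc C * γ ≤ C * 1 := mul_le_mul_of_nonneg_left hγ1 hC0
            _ = C := mul_one C
        have hcb := hbd (N₀ - m + l)
        have hbtb : ‖bt (N₀ - m + l)‖ ≤ 2 ^ N₀ + C := by
          calc ‖bt (N₀ - m + l)‖
              = ‖b (N₀ - m + l) + (bt (N₀ - m + l) - b (N₀ - m + l))‖ := by
                congr 1; ring
            _ ≤ ‖b (N₀ - m + l)‖ +
                ‖bt (N₀ - m + l) - b (N₀ - m + l)‖ := norm_add_le _ _
            _ ≤ 2 ^ N₀ + C := by linarith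
        have hμl := hμ l (Finset.mem_Icc.mpr ⟨hl.1, by omega⟩)
        have hpl := psum_abs_le' N₀ z hz l
        calc ‖μt l * bt (N₀ - m + l) - (∑ j, z j ^ l) * b (N₀ - m + l)‖
            = ‖(μt l - ∑ j, z j ^ l) * bt (N₀ - m + l) +
              (∑ j, z j ^ l) * (bt (N₀ - m + l) - b (N₀ - m + l))‖ := by
              congr 1; ring
          _ ≤ ‖(μt l - ∑ j, z j ^ l) * bt (N₀ - m + l)‖ +
              ‖(∑ j, z j ^ l) * (bt (N₀ - m + l) - b (N₀ - m + l))‖ :=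
              norm_add_le _ _
          _ ≤ γ * (2 ^ N₀ + C) + N₀ * (C * γ) := by
              rw [norm_mul, norm_mul]
              exact add_le_add
                (mul_le_mul hμl.le hbtb (norm_nonneg _) hγ0)
                (mul_le_mul hpl hIH (norm_nonneg _) (Nat.cast_nonneg _))
          _ ≤ (2 ^ N₀ + (N₀ + 1) * C) * γ := le_of_eq (by ring)
      have hdiff : bt (N₀ - m) - b (N₀ - m)
          = -(1 / (m : ℂ)) * ∑ l ∈ Finset.Icc 1 m,
              (μt l * bt (N₀ - m + l) - (∑ j, z j ^ l) * b (N₀ - m + l)) := by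
        rw [hbt m hmem, hb m hmem, Finset.sum_sub_distrib]
        ring
      rw [hdiff, norm_mul]
      have habs : ‖-(1 / (m : ℂ))‖ = 1 / m := by
        rw [norm_neg, norm_div, norm_one, Complex.norm_natCast]
      rw [habs]
      calc 1 / (m : ℝ) * ‖∑ l ∈ Finset.Icc 1 m,
            (μt l * bt (N₀ - m + l) - (∑ j, z j ^ l) * b (N₀ - m + l))‖
          ≤ 1 / (m : ℝ) * ∑ l ∈ Finset.Icc 1 m,
            ‖μt l * bt (N₀ - m + l) - (∑ j, z j ^ l) * b (N₀ - m + l)‖ :=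
            mul_le_mul_of_nonneg_left (norm_sum_le _ _) (by positivity)
        _ ≤ 1 / (m : ℝ) * ∑ _l ∈ Finset.Icc 1 m, (2 ^ N₀ + (N₀ + 1) * C) * γ :=
            mul_le_mul_of_nonneg_left (Finset.sum_le_sum hterm) (by positivity)
        _ = (2 ^ N₀ + (N₀ + 1) * C) * γ := by
            rw [Finset.sum_const, Nat.card_Icc, Nat.add_sub_cancel, nsmul_eq_mul]
            have hmpos : (0 : ℝ) < m := by exact_mod_cast Nat.pos_of_ne_zero (by omega)
            field_simp

set_option maxHeartbeats 2000000 in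
/-- Stability of Newton's identities under perturbation of the power sums. -/
theorem stmt_1 (N₀ : ℕ) :
    ∃ C : ℝ, ∀ (z : Fin N₀ → ℂ) (μt bt : ℕ → ℂ) (γ : ℝ),
      (∀ j, ‖z j‖ < 1) →
      0 ≤ γ → γ ≤ 1 →
      (∀ k ∈ Finset.Icc 1 N₀, ‖μt k - ∑ j, z j ^ k‖ < γ) →
      bt N₀ = 1 →
      (∀ k ∈ Finset.Icc 1 N₀,
        bt (N₀ - k) = -(1 / (k : ℂ)) * ∑ l ∈ Finset.Icc 1 k, μt l * bt (N₀ - k + l)) →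
      ∀ k ≤ N₀,
        ‖bt k - (∏ j, (X - Polynomial.C (z j))).coeff k‖ ≤ C * γ := by
  obtain ⟨C, _hC0, hC⟩ := main_ind N₀ N₀
  refine ⟨C, fun z μt bt γ hz hγ0 hγ1 hμ hb1 hbt k hk => ?_⟩
  set P : Polynomial ℂ := ∏ j, (X - Polynomial.C (z j)) with hP
  have hb1' : P.coeff N₀ = 1 := by
    rw [hP, coeff_eq' N₀ z le_rfl, Nat.sub_self]
    simp [Multiset.esymm]
  have hrec : ∀ l ∈ Finset.Icc 1 N₀,
      P.coeff (N₀ - l) = -(1 / (l : ℂ)) *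
        ∑ i ∈ Finset.Icc 1 l, (∑ j, z j ^ i) * P.coeff (N₀ - l + i) := by
    rw [hP]
    intro l hl
    rw [Finset.mem_Icc] at hl
    have hB := newton N₀ z hl.1 hl.2
    have hmne : (l : ℂ) ≠ 0 := Nat.cast_ne_zero.mpr (by omega)
    field_simp
    linear_combination hB
  have hbd : ∀ n, ‖P.coeff n‖ ≤ 2 ^ N₀ := by
    rw [hP]
    exact fun n => coeff_abs_le' N₀ z hz n
  have := hC z μt bt P.coeff γ hz hγ0 hγ1 hμ hb1 hbt hb1' hrec hbd (N₀ - k)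
    (by omega) (by omega)
  rwa [(by omega : N₀ - (N₀ - k) = k)] at this
end

section
/- Let d ≥ 1 and let g be a complex polynomial of degree at most d−1. Suppose h is another complex polynomial of degree at most d−1 with |h(x)| = |g(x)| for all x ∈ ℝ and |h(x·e^{iα})| = |g(x·e^{iα})| for all x ∈ ℝ, where α/π is irrational. Then there exists a unimodular constant c ∈ ℂ, |c| = 1, with h = c·g. -/
open Complex Polynomial

private lemma jaming_sq_eq (p q : ℂ[X])
    (hpq : ∀ x : ℝ, ‖p.eval (x:ℂ)‖ = ‖q.eval (x:ℂ)‖) :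
    p * p.map (starRingEnd ℂ) = q * q.map (starRingEnd ℂ) := by
  apply Polynomial.eq_of_infinite_eval_eq
  apply Set.Infinite.mono (s := Set.range ((↑) : ℝ → ℂ))
  · rintro _ ⟨x, rfl⟩
    have e : ∀ r : ℂ[X], (r.map (starRingEnd ℂ)).eval (x:ℂ) = starRingEnd ℂ (r.eval (x:ℂ)) := by
      intro r
      have : ((x:ℂ)) = starRingEnd ℂ (x:ℂ) := by simp
      conv_lhs => rw [this]
      rw [Polynomial.eval_map, Polynomial.eval₂_at_apply]
    simp only [Set.mem_setOf_eq, eval_mul, e]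
    rw [Complex.mul_conj, Complex.mul_conj, ← Complex.sq_norm, ← Complex.sq_norm, hpq]
  · exact Set.infinite_range_of_injective Complex.ofReal_injective

private lemma jaming_count_roots_conj (p : ℂ[X]) (z : ℂ) :
    (p.map (starRingEnd ℂ)).roots.count z = p.roots.count ((starRingEnd ℂ) z) := by
  classical
  rw [(IsAlgClosed.splits p).roots_map]
  conv_lhs => rw [show z = starRingEnd ℂ (starRingEnd ℂ z) by simp]
  exact Multiset.count_map_eq_count' _ _ (RingHom.injective _) _

private lemma jaming_comp_linear_cancel (p : ℂ[X]) (a : ℂ) (ha : a ≠ 0) :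
    (p.comp (C a * X)).comp (C a⁻¹ * X) = p := by
  rw [Polynomial.comp_assoc]
  have : (C a * X).comp (C a⁻¹ * X) = X := by
    simp [Polynomial.mul_comp, ← mul_assoc, ← C_mul, mul_inv_cancel₀ ha]
  rw [this, Polynomial.comp_X]

private lemma jaming_rm_le (p : ℂ[X]) (hp : p ≠ 0) (a : ℂ) (ha : a ≠ 0) (z : ℂ) :
    rootMultiplicity (a * z) p ≤ rootMultiplicity z (p.comp (C a * X)) := by
  have hq : p.comp (C a * X) ≠ 0 := by
    intro h0
    apply hp
    rw [← jaming_comp_linear_cancel p a ha, h0, Polynomial.zero_comp]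
  rw [Polynomial.le_rootMultiplicity_iff hq]
  set n := rootMultiplicity (a * z) p with hn
  obtain ⟨r, hr⟩ := Polynomial.pow_rootMultiplicity_dvd p (a * z)
  rw [← hn] at hr
  refine ⟨C a ^ n * r.comp (C a * X), ?_⟩
  rw [hr]
  simp only [Polynomial.mul_comp, Polynomial.pow_comp, Polynomial.sub_comp,
    Polynomial.X_comp, Polynomial.C_comp]
  rw [show C a * X - C (a * z) = C a * (X - C z) by rw [C_mul]; ring, mul_pow]
  ring

private lemma jaming_count_roots_comp (p : ℂ[X]) (hp : p ≠ 0) (a : ℂ) (ha : a ≠ 0) (z : ℂ) :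
    (p.comp (C a * X)).roots.count z = p.roots.count (a * z) := by
  classical
  have hq : p.comp (C a * X) ≠ 0 := by
    intro h0
    apply hp
    rw [← jaming_comp_linear_cancel p a ha, h0, Polynomial.zero_comp]
  rw [Polynomial.count_roots, Polynomial.count_roots]
  refine le_antisymm ?_ (jaming_rm_le p hp a ha z)
  have h2 := jaming_rm_le (p.comp (C a * X)) hq a⁻¹ (inv_ne_zero ha) (a * z)
  rw [jaming_comp_linear_cancel p a ha, inv_mul_cancel_left₀ ha] at h2
  exact h2

private lemma jaming_exp_pow_inj (α : ℝ) (hα : Irrational (α / Real.pi)) {m n : ℕ}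
    (hmn : Complex.exp (α * Complex.I) ^ m = Complex.exp (α * Complex.I) ^ n) : m = n := by
  rw [← Complex.exp_nat_mul, ← Complex.exp_nat_mul, Complex.exp_eq_exp_iff_exists_int] at hmn
  obtain ⟨k, hk⟩ := hmn
  have him : (m : ℝ) * α = (n : ℝ) * α + (k : ℝ) * (2 * Real.pi) := by
    have := congrArg Complex.im hk
    simpa using this
  by_contra hne
  have hmnne : (m : ℝ) - n ≠ 0 := by
    rw [sub_ne_zero]
    exact_mod_cast hne
  apply hα
  refine ⟨(2 * k : ℚ) / ((m : ℚ) - n), ?_⟩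
  push_cast
  rw [div_eq_div_iff hmnne Real.pi_ne_zero]
  nlinarith [him]

/-- Jaming's uniqueness: magnitudes on two lines meeting at an irrational angle
determine a polynomial up to a unimodular constant. -/
theorem stmt_18 (d : ℕ) (hd : 1 ≤ d) (g h : Polynomial ℂ)
    (hgdeg : g.natDegree ≤ d - 1) (hhdeg : h.natDegree ≤ d - 1)
    (α : ℝ) (hα : Irrational (α / Real.pi))
    (h1 : ∀ x : ℝ, ‖h.eval (x : ℂ)‖ = ‖g.eval (x : ℂ)‖)
    (h2 : ∀ x : ℝ, ‖h.eval ((x : ℂ) * Complex.exp (α * Complex.I))‖ =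
      ‖g.eval ((x : ℂ) * Complex.exp (α * Complex.I))‖) :
    ∃ c : ℂ, ‖c‖ = 1 ∧ h = Polynomial.C c * g := by
  classical
  by_cases hg0 : g = 0
  · refine ⟨1, by simp, ?_⟩
    have hzero : h = 0 := by
      apply Polynomial.eq_zero_of_infinite_isRoot
      apply Set.Infinite.mono (s := Set.range ((↑) : ℝ → ℂ))
      · rintro _ ⟨x, rfl⟩
        have := h1 x
        rw [hg0] at this
        simp only [Polynomial.eval_zero, norm_zero] at this
        simpa [Polynomial.IsRoot] using (norm_eq_zero.mp this)
      · exact Set.infinite_range_of_injective Complex.ofReal_injective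
    rw [hzero, hg0, mul_zero]
  set ω : ℂ := Complex.exp (α * Complex.I) with hωdef
  have hω0 : ω ≠ 0 := Complex.exp_ne_zero _
  have habsω : ‖ω‖ = 1 := by
    rw [hωdef, Complex.norm_exp]
    simp
  have hωc : ω * (starRingEnd ℂ) ω = 1 := by
    rw [Complex.mul_conj, Complex.normSq_eq_norm_sq, habsω]
    norm_num
  have E1 := jaming_sq_eq h g h1
  have E2 : (h.comp (C ω * X)) * (h.comp (C ω * X)).map (starRingEnd ℂ)
      = (g.comp (C ω * X)) * (g.comp (C ω * X)).map (starRingEnd ℂ) := by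
    apply jaming_sq_eq
    intro x
    simp only [Polynomial.eval_comp, Polynomial.eval_mul, Polynomial.eval_C, Polynomial.eval_X]
    rw [mul_comm ω (x : ℂ)]
    exact h2 x
  have hmapne : ∀ p : ℂ[X], p ≠ 0 → p.map (starRingEnd ℂ) ≠ 0 := by
    intro p hp h0
    exact hp ((Polynomial.map_eq_zero_iff (RingHom.injective _)).mp h0)
  have hh0 : h ≠ 0 := by
    intro h0
    rw [h0, zero_mul] at E1
    rcases mul_eq_zero.mp E1.symm with h' | h'
    · exact hg0 h'
    · exact hg0 ((Polynomial.map_eq_zero_iff (RingHom.injective _)).mp h')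
  have hcompne : ∀ p : ℂ[X], p ≠ 0 → p.comp (C ω * X) ≠ 0 := by
    intro p hp h0
    apply hp
    rw [← jaming_comp_linear_cancel p ω hω0, h0, Polynomial.zero_comp]
  have C1 : ∀ z : ℂ, h.roots.count z + h.roots.count ((starRingEnd ℂ) z)
      = g.roots.count z + g.roots.count ((starRingEnd ℂ) z) := by
    intro z
    have hc := congrArg (fun p : ℂ[X] => p.roots.count z) E1
    rw [Polynomial.roots_mul (mul_ne_zero hh0 (hmapne h hh0)),
        Polynomial.roots_mul (mul_ne_zero hg0 (hmapne g hg0)),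
        Multiset.count_add, Multiset.count_add,
        jaming_count_roots_conj, jaming_count_roots_conj] at hc
    exact hc
  have C2 : ∀ z : ℂ, h.roots.count (ω * z) + h.roots.count (ω * (starRingEnd ℂ) z)
      = g.roots.count (ω * z) + g.roots.count (ω * (starRingEnd ℂ) z) := by
    intro z
    have hc := congrArg (fun p : ℂ[X] => p.roots.count z) E2
    rw [Polynomial.roots_mul (mul_ne_zero (hcompne h hh0) (hmapne _ (hcompne h hh0))),
        Polynomial.roots_mul (mul_ne_zero (hcompne g hg0) (hmapne _ (hcompne g hg0))),
        Multiset.count_add, Multiset.count_add,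
        jaming_count_roots_conj, jaming_count_roots_conj,
        jaming_count_roots_comp h hh0 ω hω0, jaming_count_roots_comp h hh0 ω hω0,
        jaming_count_roots_comp g hg0 ω hω0, jaming_count_roots_comp g hg0 ω hω0] at hc
    exact hc
  set D : ℂ → ℤ := fun z => (h.roots.count z : ℤ) - (g.roots.count z : ℤ) with hD
  have DA : ∀ z, D ((starRingEnd ℂ) z) = - D z := by
    intro z
    have := C1 z
    simp only [hD]
    omega
  have DB : ∀ z, D (ω * (starRingEnd ℂ) z) = - D (ω * z) := by
    intro z
    have := C2 z
    simp only [hD]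
    omega
  have Drot : ∀ z, D (ω * (ω * z)) = D z := by
    intro z
    have hb := DB ((starRingEnd ℂ) (ω * z))
    have e1 : (starRingEnd ℂ) ((starRingEnd ℂ) (ω * z)) = ω * z := Complex.conj_conj _
    have e2 : ω * (starRingEnd ℂ) (ω * z) = (starRingEnd ℂ) z := by
      rw [map_mul, ← mul_assoc, hωc, one_mul]
    rw [e1, e2] at hb
    rw [hb, DA z, neg_neg]
  have D0 : ∀ z, D z = 0 := by
    by_contra hcon
    push_neg at hcon
    obtain ⟨a, haD⟩ := hcon
    have ha0 : a ≠ 0 := by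
      rintro rfl
      have h00 := DA 0
      rw [map_zero] at h00
      exact haD (by omega)
    have hiter : ∀ n : ℕ, D (ω ^ (2 * n) * a) ≠ 0 := by
      intro n
      induction n with
      | zero => simpa using haD
      | succ k ih =>
          have e : ω ^ (2 * (k + 1)) * a = ω * (ω * (ω ^ (2 * k) * a)) := by
            rw [show 2 * (k + 1) = 2 * k + 2 by omega, pow_add]
            ring
          rw [e, Drot]
          exact ih
    have hinj : Function.Injective (fun n : ℕ => ω ^ (2 * n) * a) := by
      intro m n hmn
      simp only at hmn
      have hpow : ω ^ (2 * m) = ω ^ (2 * n) := mul_right_cancel₀ ha0 hmn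
      have := jaming_exp_pow_inj α hα (m := 2 * m) (n := 2 * n) (by rw [← hωdef]; exact hpow)
      omega
    have hinf : {z : ℂ | D z ≠ 0}.Infinite :=
      Set.infinite_of_injective_forall_mem hinj (fun n => hiter n)
    have hfin : {z : ℂ | D z ≠ 0}.Finite := by
      apply Set.Finite.subset (h.roots.toFinset ∪ g.roots.toFinset : Finset ℂ).finite_toSet
      intro z hz
      simp only [Set.mem_setOf_eq, hD] at hz
      by_contra hmem
      simp only [Finset.coe_union, Set.mem_union, Finset.mem_coe,
        Multiset.mem_toFinset, not_or] at hmem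
      apply hz
      rw [Multiset.count_eq_zero_of_notMem hmem.1, Multiset.count_eq_zero_of_notMem hmem.2]
      simp
    exact hinf hfin
  have hroots : h.roots = g.roots := by
    rw [Multiset.ext]
    intro z
    have := D0 z
    simp only [hD] at this
    omega
  have hlg0 : g.leadingCoeff ≠ 0 := Polynomial.leadingCoeff_ne_zero.mpr hg0
  have hlead : ‖h.leadingCoeff‖ = ‖g.leadingCoeff‖ := by
    have hc := congrArg Polynomial.leadingCoeff E1
    rw [Polynomial.leadingCoeff_mul, Polynomial.leadingCoeff_mul,
        Polynomial.leadingCoeff_map, Polynomial.leadingCoeff_map,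
        Complex.mul_conj, Complex.mul_conj] at hc
    have hns : Complex.normSq h.leadingCoeff = Complex.normSq g.leadingCoeff :=
      Complex.ofReal_injective hc
    rw [Complex.normSq_eq_norm_sq, Complex.normSq_eq_norm_sq] at hns
    exact (pow_left_inj₀ (norm_nonneg _) (norm_nonneg _) two_ne_zero).mp hns
  refine ⟨h.leadingCoeff / g.leadingCoeff, ?_, ?_⟩
  · rw [norm_div, hlead, div_self]
    exact norm_ne_zero_iff.mpr hlg0
  · have hfh := (IsAlgClosed.splits h).eq_prod_roots
    have hfg := (IsAlgClosed.splits g).eq_prod_roots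
    calc h = C h.leadingCoeff * (h.roots.map fun a => X - C a).prod := hfh
      _ = C (h.leadingCoeff / g.leadingCoeff)
          * (C g.leadingCoeff * (g.roots.map fun a => X - C a).prod) := by
            rw [hroots, ← mul_assoc, ← Polynomial.C_mul, div_mul_cancel₀ _ hlg0]
      _ = C (h.leadingCoeff / g.leadingCoeff) * g := by rw [← hfg]
end
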